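/- Let m = 4h + 1 with h ≥ 1 and n = 2^m - 1. Let i + 2^(2h) with 0 ≤ i ≤ 2^h - 1 and let j be odd with 1 ≤ j ≤ 2^h - 1. Then the 2-cyclotomic cosets of i + 2^(2h) and of j modulo n intersect if and only if (i, j) = (0, 1), in which case they coincide. -/

import Mathlib

theorem aux_coset_key (h : ℕ) (hh : 1 ≤ h) (i j w : ℕ)
    (hi : i ≤ 2 ^ h - 1) (hjodd : Odd j) (hj2 : j ≤ 2 ^ h - 1)
    (hw : w < 4 * h + 1)
    (heq : (2 ^ w * j) % (2 ^ (4 * h + 1) - 1) = (i + 2 ^ (2 * h)) % (2 ^ (4 * h + 1) - 1)) :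
    i = 0 ∧ j = 1 := by
  set m := 4 * h + 1 with hm
  set n := 2 ^ m - 1 with hn
  have h1 : (1:ℕ) ≤ 2 ^ m := Nat.one_le_two_pow
  have hnn : n + 1 = 2 ^ m := Nat.sub_add_cancel h1
  have hp : ∀ a b : ℕ, a ≤ b → 2 ^ a ≤ 2 ^ b := fun a b hab => Nat.pow_le_pow_right (by norm_num) hab
  have hone : ∀ a : ℕ, (1:ℕ) ≤ 2 ^ a := fun a => Nat.one_le_two_pow
  have h2h : 2 ^ h ≤ 2 ^ (2 * h) := hp h (2*h) (by omega)
  have h1h : (1:ℕ) ≤ 2 ^ h := hone h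
  have h12h : (1:ℕ) ≤ 2 ^ (2*h) := hone (2*h)
  have h2hm : 2 ^ (2*h) * 2 * 2 ≤ 2 ^ m := by
    have := hp (2*h+2) m (by omega)
    rw [pow_add, pow_add] at this; rw [hm, pow_succ]; simpa [mul_assoc] using this
  have hlt : i + 2 ^ (2 * h) < n := by omega
  rcases Nat.lt_or_ge w (3*h+2) with hw1 | hw2
  · -- 2^w * j < n, so exact equality
    have hb : 2 ^ w * j ≤ 2 ^ (3*h+1) * (2^h - 1) :=
      Nat.mul_le_mul (hp w (3*h+1) (by omega)) hj2
    have he1 : 2 ^ (3*h+1) * (2^h - 1) = 2 ^ m - 2 ^ (3*h+1) := by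
      rw [Nat.mul_sub, mul_one, ← pow_add]
      congr 2; omega
    have h31 : 2 ≤ 2 ^ (3*h+1) := hp 1 (3*h+1) (by omega)
    have hlt2 : 2 ^ w * j < n := by omega
    have e : 2 ^ w * j = i + 2 ^ (2*h) := by
      rwa [Nat.mod_eq_of_lt hlt2, Nat.mod_eq_of_lt hlt] at heq
    have hwge : h + 1 ≤ w := by
      by_contra hc
      have hb2 : 2 ^ w * j ≤ 2 ^ h * (2 ^ h - 1) := Nat.mul_le_mul (hp w h (by omega)) hj2
      have e2 : 2 ^ h * (2 ^ h - 1) = 2 ^ (2*h) - 2^h := by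
        rw [Nat.mul_sub, mul_one, ← pow_add]; congr 2; omega
      omega
    have hd1 : (2:ℕ) ^ (h+1) ∣ 2 ^ w := pow_dvd_pow 2 hwge
    have hd2 : (2:ℕ) ^ (h+1) ∣ i + 2 ^ (2*h) := by rw [← e]; exact hd1.mul_right j
    have hd3 : (2:ℕ) ^ (h+1) ∣ 2 ^ (2*h) := pow_dvd_pow 2 (by omega)
    have hd4 : (2:ℕ) ^ (h+1) ∣ i := (Nat.dvd_add_right hd3).mp (by rwa [Nat.add_comm i (2^(2*h))] at hd2)
    have hi0 : i = 0 := Nat.eq_zero_of_dvd_of_lt hd4 (by have := hp h (h+1) (by omega); omega)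
    refine ⟨hi0, ?_⟩
    have e3 : 2 ^ w * j = 2 ^ (2*h) := by omega
    have hjd : j ∣ 2 ^ (2*h) := Dvd.intro_left _ e3
    exact (Nat.Coprime.pow_right (2*h) (Nat.coprime_two_right.mpr hjodd)).eq_one_of_dvd hjd
  · -- wrap-around case: contradiction
    exfalso
    have hmw : 1 ≤ m - w := by omega
    obtain ⟨lo, hlo⟩ : ∃ lo, lo = j % 2 ^ (m - w) := ⟨_, rfl⟩
    obtain ⟨hi', hhi⟩ : ∃ hi', hi' = j / 2 ^ (m - w) := ⟨_, rfl⟩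
    have hsplit : j = hi' * 2 ^ (m - w) + lo := by
      rw [hhi, hlo, mul_comm]; exact (Nat.div_add_mod j _).symm
    have hkey : 2 ^ w * j = hi' * 2 ^ m + 2 ^ w * lo := by
      rw [hsplit, Nat.mul_add]
      congr 1
      rw [mul_comm (2^w), mul_assoc, ← pow_add]
      congr 2; omega
    -- lo is odd, hence ≥ 1
    have hlood : lo % 2 = 1 := by
      have : (2:ℕ) ∣ 2 ^ (m - w) := dvd_pow_self 2 (by omega)
      rw [hlo, Nat.mod_mod_of_dvd j this]
      exact Nat.odd_iff.mp hjodd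
    -- bounds
    have hhib : hi' < 2 ^ (w - (3*h+1)) := by
      rw [hhi, Nat.div_lt_iff_lt_mul (by positivity : 0 < 2 ^ (m - w)), ← pow_add]
      have := hp h ((w - (3*h+1)) + (m - w)) (by omega)
      omega
    have hlob : lo < 2 ^ (m - w) := by
      rw [hlo]; exact Nat.mod_lt _ (by positivity)
    have hwle : 2 ^ (w - (3*h+1)) ≤ 2 ^ w := hp _ _ (by omega)
    have hsum : hi' + 2 ^ w * lo < n := by
      have h2 : 2 ^ w * lo + 2 ^ w ≤ 2 ^ m := by
        have e4 : 2 ^ w * lo + 2 ^ w = 2 ^ w * (lo + 1) := by ring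
        rw [e4]
        calc 2 ^ w * (lo + 1) ≤ 2 ^ w * 2 ^ (m - w) := Nat.mul_le_mul_left _ (by omega)
          _ = 2 ^ m := by rw [← pow_add]; congr 1; omega
      have hr2 : 2 ^ (w - (3*h+1)) * 2 ≤ 2 ^ w := by
        have := hp (w - (3*h+1) + 1) w (by omega)
        rwa [pow_succ] at this
      have hr1 : (1:ℕ) ≤ 2 ^ (w - (3*h+1)) := hone _
      omega
    -- 2^w * j ≡ hi' + 2^w * lo [MOD n]
    have hmod : (2 ^ w * j) % n = (hi' + 2 ^ w * lo) % n := by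
      rw [hkey]
      have : (hi' * 2 ^ m + 2 ^ w * lo) % n = (hi' * 1 + 2 ^ w * lo) % n := by
        apply Nat.ModEq.add_right
        exact Nat.ModEq.mul_left hi' (((Nat.modEq_iff_dvd' h1).mpr dvd_rfl).symm)
      simpa using this
    have heq2 : hi' + 2 ^ w * lo = i + 2 ^ (2*h) := by
      rw [hmod, Nat.mod_eq_of_lt hsum, Nat.mod_eq_of_lt hlt] at heq
      exact heq
    -- but 2^w * lo ≥ 2^w ≥ 2^(3h+2) > i + 2^(2h)
    have hbig : 2 ^ (3*h+2) ≤ 2 ^ w := hp _ _ (by omega)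
    have hbig2 : 2 ^ (2*h) * 2 * 2 ≤ 2 ^ (3*h+2) := by
      calc 2 ^ (2*h) * 2 * 2 = 2 ^ (2*h+2) := by ring
        _ ≤ 2 ^ (3*h+2) := hp _ _ (by omega)
    have : 2 ^ w ≤ 2 ^ w * lo := Nat.le_mul_of_pos_right _ (by omega)
    omega
theorem coset_B_meets_coset_odd_iff (h : ℕ) (hh : 1 ≤ h) (i j : ℕ)
    (hi : i ≤ 2 ^ h - 1) (hjodd : Odd j) (hj1 : 1 ≤ j) (hj2 : j ≤ 2 ^ h - 1) :
    ((∃ x : ℕ, (∃ u : ℕ, x = (2 ^ u * (i + 2 ^ (2 * h))) % (2 ^ (4 * h + 1) - 1)) ∧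
        (∃ u : ℕ, x = (2 ^ u * j) % (2 ^ (4 * h + 1) - 1))) ↔ (i = 0 ∧ j = 1)) ∧
    (i = 0 ∧ j = 1 →
      {x : ℕ | ∃ u : ℕ, x = (2 ^ u * (i + 2 ^ (2 * h))) % (2 ^ (4 * h + 1) - 1)} =
      {x : ℕ | ∃ u : ℕ, x = (2 ^ u * j) % (2 ^ (4 * h + 1) - 1)}) := by
  have hm1 : (1:ℕ) ≤ 2 ^ (4*h+1) := Nat.one_le_two_pow
  have hcyc : Nat.ModEq (2^(4*h+1)-1) (2^(4*h+1)) 1 :=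
    ((Nat.modEq_iff_dvd' hm1).mpr dvd_rfl).symm
  have hcycpow : ∀ t : ℕ,
      Nat.ModEq (2^(4*h+1)-1) (2^t) (2^(t % (4*h+1))) := by
    intro t
    have h1 : (2:ℕ)^t = (2^(4*h+1))^(t/(4*h+1)) * 2^(t % (4*h+1)) := by
      rw [← pow_mul, ← pow_add, Nat.div_add_mod]
    rw [h1]
    simpa using Nat.ModEq.mul_right (2^(t % (4*h+1))) (hcyc.pow (t/(4*h+1)))
  constructor
  · constructor
    · rintro ⟨x, ⟨u, hx1⟩, ⟨v, hx2⟩⟩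
      have hA : Nat.ModEq (2^(4*h+1)-1) (2^u * (i + 2^(2*h))) (2^v * j) :=
        hx1.symm.trans hx2
      have hwlt : (u*(4*h)+v) % (4*h+1) < 4*h+1 := Nat.mod_lt _ (by omega)
      refine aux_coset_key h hh i j _ hi hjodd hj2 hwlt ?_
      have c1 := hA.mul_left (2^(u*(4*h)))
      have e1 : 2^(u*(4*h)) * (2^u * (i+2^(2*h))) = 2^(u*(4*h+1)) * (i+2^(2*h)) := by
        rw [← mul_assoc, ← pow_add]
        have : u*(4*h) + u = u*(4*h+1) := by ring
        rw [this]
      have e2 : 2^(u*(4*h)) * (2^v * j) = 2^(u*(4*h)+v) * j := by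
        rw [← mul_assoc, ← pow_add]
      rw [e1, e2] at c1
      have c2 : Nat.ModEq (2^(4*h+1)-1) (2^(u*(4*h+1))) 1 := by
        have e3 : u*(4*h+1) = (4*h+1)*u := by ring
        rw [e3, pow_mul]
        simpa using hcyc.pow u
      have c3 : Nat.ModEq (2^(4*h+1)-1) (2^(u*(4*h+1)) * (i+2^(2*h))) (i+2^(2*h)) := by
        simpa using c2.mul_right (i+2^(2*h))
      have c4 : Nat.ModEq (2^(4*h+1)-1) (2^((u*(4*h)+v) % (4*h+1)) * j) (2^(u*(4*h)+v) * j) :=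
        (hcycpow (u*(4*h)+v)).symm.mul_right j
      exact c4.trans (c1.symm.trans c3)
    · rintro ⟨rfl, rfl⟩
      refine ⟨(2^0 * (0 + 2^(2*h))) % (2^(4*h+1)-1), ⟨0, rfl⟩, ⟨2*h, ?_⟩⟩
      norm_num
  · rintro ⟨rfl, rfl⟩
    ext x
    simp only [Set.mem_setOf_eq]
    constructor
    · rintro ⟨u, rfl⟩
      refine ⟨u + 2*h, ?_⟩
      have e : 2^u * (0 + 2^(2*h)) = 2^(u+2*h) * 1 := by rw [pow_add]; ring
      rw [e]
    · rintro ⟨u, rfl⟩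
      refine ⟨u + 4*h*(2*h), ?_⟩
      have key : Nat.ModEq (2^(4*h+1)-1) (2^(u + 4*h*(2*h)) * (0 + 2^(2*h))) (2^u * 1) := by
        have e : 2^(u + 4*h*(2*h)) * (0 + 2^(2*h)) = 2^u * (2^(4*h+1))^(2*h) := by
          rw [zero_add, ← pow_mul, mul_comm (2^u), ← pow_add]
          have : u + 4*h*(2*h) + 2*h = (4*h+1)*(2*h) + u := by ring
          rw [this, pow_add, mul_comm]
        rw [e]
        simpa using (hcyc.pow (2*h)).mul_left (2^u)
      exact key.symm
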